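/- Let w be a doubling weight on [-1,1] in the class W(Z), 0 < p < ∞, r ∈ ℕ, and A, t > 0. Then for every f ∈ L^p_w, ω^r_φ(f, A, t)_{p,w} ≤ c ‖f‖_{p,w}, where ω^r_φ(f, A, t)_{p,w} = Ω^r_φ(f, A, t)_{p,w} + ∑_{j=1}^M E_r(f)_{L^p(Z^j_{2A,t}), w}, and c depends only on r, p, A and the weight w. -/

import Mathlib

open MeasureTheory

noncomputable def phiw (x : ℝ) : ℝ := Real.sqrt (1 - x^2)

noncomputable def rho (h x : ℝ) : ℝ := h * phiw x + h^2

noncomputable def wInt (w : ℝ → ℝ) (a b : ℝ) : ℝ :=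
  ∫ u in Set.Icc a b ∩ Set.Icc (-1:ℝ) 1, w u

def IsDoubling (w : ℝ → ℝ) (L : ℝ) : Prop :=
  (∀ x, 0 ≤ w x) ∧ IntegrableOn w (Set.Icc (-1:ℝ) 1) ∧
  (0 < ∫ u in Set.Icc (-1:ℝ) 1, w u) ∧
  ∀ a b : ℝ, -1 ≤ a → a ≤ b → b ≤ 1 →
    wInt w ((a+b)/2 - (b-a)) ((a+b)/2 + (b-a)) ≤ L * wInt w a b

/-- The class `W(Z)`: `w(x) ≍ w(y)` whenever `|x-y| ≤ ρ(ε,x)` and `[x,y]` stays at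
distance `≥ ρ(ε,z_j)` from every `z_j`. -/
def WClass (M : ℕ) (z : Fin M → ℝ) (w : ℝ → ℝ) : Prop :=
  ∃ cs : ℝ, 0 < cs ∧ ∀ ε : ℝ, 0 < ε → ∀ x y : ℝ,
    x ∈ Set.Icc (-1:ℝ) 1 → y ∈ Set.Icc (-1:ℝ) 1 → |x - y| ≤ rho ε x →
    (∀ j, ∀ u ∈ Set.uIcc x y, rho ε (z j) ≤ |u - z j|) →
    cs * w y ≤ w x ∧ w x ≤ cs⁻¹ * w y

open Classical in
noncomputable def sdiffR (r : ℕ) (h : ℝ) (f : ℝ → ℝ) (x : ℝ) (S : Set ℝ) : ℝ :=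
  if Set.Icc (x - r * h / 2) (x + r * h / 2) ⊆ S then
    ∑ i ∈ Finset.range (r+1), (r.choose i : ℝ) * (-1)^(r - i) * f (x - r * h / 2 + i * h)
  else 0

/-- The weighted `L^p` (quasi)norm of `g` on `S`. -/
noncomputable def wNorm (p : ℝ) (w : ℝ → ℝ) (S : Set ℝ) (g : ℝ → ℝ) : ℝ :=
  (∫ x in S, |g x| ^ p * w x) ^ (1/p)

def ISet (M : ℕ) (z : Fin M → ℝ) (A h : ℝ) : Set ℝ :=
  {x | x ∈ Set.Icc (-1:ℝ) 1 ∧ ∀ j, A * rho h (z j) ≤ |x - z j|}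

def ZSet (M : ℕ) (z : Fin M → ℝ) (j : Fin M) (A h : ℝ) : Set ℝ :=
  {x | x ∈ Set.Icc (-1:ℝ) 1 ∧ |x - z j| ≤ A * rho h (z j)}

/-- The main part weighted modulus of smoothness `Ω_φ^r(f, A, t)_{p,w}`. -/
noncomputable def OmegaMod (r : ℕ) (p : ℝ) (w : ℝ → ℝ) (M : ℕ) (z : Fin M → ℝ)
    (A t : ℝ) (f : ℝ → ℝ) : ℝ :=
  ⨆ h : Set.Ioc (0:ℝ) t,
    wNorm p w (ISet M z A (h:ℝ))
      (fun x => sdiffR r ((h:ℝ) * phiw x) f x (ISet M z A (h:ℝ)))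

/-- Best weighted polynomial approximation `E_r(f)_{L^p(S),w}` by degree `< r`. -/
noncomputable def Er (r : ℕ) (p : ℝ) (w : ℝ → ℝ) (S : Set ℝ) (f : ℝ → ℝ) : ℝ :=
  ⨅ q : {q : Polynomial ℝ // q.degree < (r : WithBot ℕ)},
    wNorm p w S (fun x => f x - (q : Polynomial ℝ).eval x)

/-- The complete weighted modulus `ω_φ^r(f, A, t)_{p,w}`. -/
noncomputable def omegaMod (r : ℕ) (p : ℝ) (w : ℝ → ℝ) (M : ℕ) (z : Fin M → ℝ)
    (A t : ℝ) (f : ℝ → ℝ) : ℝ :=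
  OmegaMod r p w M z A t f + ∑ j : Fin M, Er r p w (ZSet M z j (2*A) t) f

/-! ### Auxiliary lemmas -/

lemma phiw_nonneg (x : ℝ) : 0 ≤ phiw x := Real.sqrt_nonneg _

lemma continuous_phiw : Continuous phiw :=
  Real.continuous_sqrt.comp (by continuity)

lemma phiw_cos {θ : ℝ} (h0 : 0 ≤ θ) (hπ : θ ≤ Real.pi) : phiw (Real.cos θ) = Real.sin θ := by
  unfold phiw
  rw [show (1 : ℝ) - Real.cos θ ^ 2 = Real.sin θ ^ 2 by
    nlinarith [Real.sin_sq_add_cos_sq θ]]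
  exact Real.sqrt_sq (Real.sin_nonneg_of_nonneg_of_le_pi h0 hπ)

lemma alt_sum_choose {r : ℕ} (hr : 1 ≤ r) :
    ∑ i ∈ Finset.range (r+1), (r.choose i : ℝ) * (-1)^(r - i) = 0 := by
  have h := add_pow (1 : ℝ) (-1) r
  simp only [one_pow, one_mul, add_neg_cancel] at h
  rw [zero_pow (by omega)] at h
  rw [show (∑ i ∈ Finset.range (r+1), (r.choose i : ℝ) * (-1)^(r - i))
      = ∑ i ∈ Finset.range (r+1), (-1:ℝ)^(r - i) * (r.choose i) from
    Finset.sum_congr rfl fun i _ => by ring]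
  exact h.symm

lemma abs_sin_sub_sin (x y : ℝ) : |Real.sin x - Real.sin y| ≤ |x - y| := by
  rw [Real.sin_sub_sin, abs_mul, abs_mul]
  have h1 : |Real.sin ((x - y) / 2)| ≤ |(x - y) / 2| := Real.abs_sin_le_abs
  have h2 : |Real.cos ((x + y) / 2)| ≤ 1 := Real.abs_cos_le_one _
  have h3 : |(x - y) / 2| = |x - y| / 2 := by rw [abs_div]; norm_num
  have h1' : |Real.sin ((x - y) / 2)| ≤ |x - y| / 2 := h3 ▸ h1
  have h4 : (0:ℝ) ≤ |Real.sin ((x - y) / 2)| := abs_nonneg _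
  have h5 : (0:ℝ) ≤ |x - y| := abs_nonneg _
  calc |(2:ℝ)| * |Real.sin ((x - y) / 2)| * |Real.cos ((x + y) / 2)|
      ≤ |(2:ℝ)| * |Real.sin ((x - y) / 2)| * 1 := by
        apply mul_le_mul_of_nonneg_left h2 (by positivity)
    _ = 2 * |Real.sin ((x - y) / 2)| := by rw [abs_two]; ring
    _ ≤ 2 * (|x - y| / 2) := by linarith
    _ = |x - y| := by ring

lemma cos_diff_bound {a b : ℝ} (ha0 : 0 ≤ a) (haπ : a ≤ Real.pi) :
    |Real.cos a - Real.cos b| ≤ |a - b| * Real.sin a + |a - b|^2 / 2 := by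
  rw [Real.cos_sub_cos]
  have h1 : |Real.sin ((a - b) / 2)| ≤ |a - b| / 2 := by
    calc |Real.sin ((a - b) / 2)| ≤ |(a - b) / 2| := Real.abs_sin_le_abs
      _ = |a - b| / 2 := by rw [abs_div]; norm_num
  have h2 : |Real.sin ((a + b) / 2)| ≤ Real.sin a + |a - b| / 2 := by
    have h3 : |Real.sin ((a + b) / 2) - Real.sin a| ≤ |(a + b) / 2 - a| := abs_sin_sub_sin _ _
    have h4 : |(a + b) / 2 - a| = |a - b| / 2 := by
      rw [show (a + b) / 2 - a = -((a - b) / 2) by ring, abs_neg, abs_div]; norm_num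
    have h5 : |Real.sin a| = Real.sin a :=
      abs_of_nonneg (Real.sin_nonneg_of_nonneg_of_le_pi ha0 haπ)
    have h6 : |Real.sin ((a + b) / 2)| ≤ |Real.sin a| + |Real.sin ((a + b) / 2) - Real.sin a| := by
      have := abs_add_le (Real.sin a) (Real.sin ((a + b) / 2) - Real.sin a)
      simpa using this
    calc |Real.sin ((a + b) / 2)| ≤ |Real.sin a| + |Real.sin ((a + b) / 2) - Real.sin a| := h6
      _ ≤ Real.sin a + |a - b| / 2 := by rw [h5]; exact add_le_add le_rfl (h4 ▸ h3)
  have hs : (0:ℝ) ≤ Real.sin a := Real.sin_nonneg_of_nonneg_of_le_pi ha0 haπ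
  calc |(-2 : ℝ) * Real.sin ((a + b) / 2) * Real.sin ((a - b) / 2)|
      = 2 * |Real.sin ((a + b) / 2)| * |Real.sin ((a - b) / 2)| := by
        rw [abs_mul, abs_mul]; norm_num
    _ ≤ 2 * (Real.sin a + |a - b| / 2) * (|a - b| / 2) := by
        apply mul_le_mul
        · exact mul_le_mul_of_nonneg_left h2 (by norm_num)
        · exact h1
        · exact abs_nonneg _
        · positivity
    _ = |a - b| * Real.sin a + |a - b| * (|a - b|) / 2 := by ring
    _ = |a - b| * Real.sin a + |a - b|^2 / 2 := by ring

lemma sin_mid_ge {a b : ℝ} (ha : a ∈ Set.Icc 0 Real.pi) (hb : b ∈ Set.Icc 0 Real.pi) :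
    (Real.sin a + Real.sin b) / 2 ≤ Real.sin ((a + b) / 2) := by
  have h := strictConcaveOn_sin_Icc.concaveOn.2 ha hb
    (by norm_num : (0:ℝ) ≤ 1/2) (by norm_num : (0:ℝ) ≤ 1/2) (by norm_num)
  simp only [smul_eq_mul] at h
  calc (Real.sin a + Real.sin b) / 2 = 1/2 * Real.sin a + 1/2 * Real.sin b := by ring
    _ ≤ Real.sin (1/2 * a + 1/2 * b) := h
    _ = Real.sin ((a + b) / 2) := by ring_nf

lemma jordan_bound {u c : ℝ} (h0 : 0 ≤ u) (huπ : u ≤ Real.pi)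
    (hb : Real.sin (u/2) ≤ c) : u ≤ Real.pi * c := by
  have h := Real.mul_le_sin (x := u/2) (by linarith) (by linarith)
  have hπ := Real.pi_pos
  have : 2 / Real.pi * (u/2) ≤ c := le_trans h hb
  calc u = Real.pi * (2 / Real.pi * (u/2)) := by field_simp
    _ ≤ Real.pi * c := mul_le_mul_of_nonneg_left this hπ.le


lemma abs_sin_half {u : ℝ} (h : |u| ≤ Real.pi) : |Real.sin (u/2)| = Real.sin (|u|/2) := by
  rcases le_or_gt 0 u with h0 | h0
  · rw [abs_of_nonneg h0] at h ⊢
    exact abs_of_nonneg (Real.sin_nonneg_of_nonneg_of_le_pi (by linarith) (by linarith))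
  · rw [abs_of_neg h0] at h ⊢
    rw [show u/2 = -(-u/2) from by ring, Real.sin_neg, abs_neg]
    exact abs_of_nonneg (Real.sin_nonneg_of_nonneg_of_le_pi (by linarith) (by linarith))

set_option maxHeartbeats 2000000 in
/-- Core estimate: the integral of the `p`-th power of the restricted symmetric
difference over the main set is controlled by the weighted norm of `f`. -/
lemma core_bound (M : ℕ) (z : Fin M → ℝ) (w : ℝ → ℝ) (hw0 : ∀ x, 0 ≤ w x)
    (cs : ℝ) (hcs : 0 < cs)
    (hwZ : ∀ ε : ℝ, 0 < ε → ∀ x y : ℝ, x ∈ Set.Icc (-1:ℝ) 1 → y ∈ Set.Icc (-1:ℝ) 1 →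
      |x - y| ≤ rho ε x → (∀ j, ∀ u ∈ Set.uIcc x y, rho ε (z j) ≤ |u - z j|) →
      w x ≤ cs⁻¹ * w y)
    (p : ℝ) (hp : 0 < p) (r : ℕ) (hr : 1 ≤ r) (A : ℝ) (hA : 0 < A)
    (f : ℝ → ℝ) (hfi : IntegrableOn (fun x => |f x| ^ p * w x) (Set.Icc (-1:ℝ) 1))
    (h : ℝ) (hh : 0 < h) :
    ∫ x in ISet M z A h, |sdiffR r (h * phiw x) f x (ISet M z A h)| ^ p * w x ≤
      ((((r:ℝ)+1) * 2^r)^p * (cs⁻¹)^(Nat.ceil (Real.pi * r / (2 * min A 1))) * 2 * ((r:ℝ)+1)) *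
        ∫ x in Set.Icc (-1:ℝ) 1, |f x| ^ p * w x := by
  -- notation
  set S : Set ℝ := ISet M z A h with hS
  set b : ℝ := (r:ℝ) * h / 2 with hbdef
  have hb : 0 < b := by
    have : (1:ℝ) ≤ (r:ℝ) := by exact_mod_cast hr
    rw [hbdef]; positivity
  set m : ℝ := (1 - b^2) / (1 + b^2) with hmdef
  have hm1 : m < 1 := by
    rw [hmdef, div_lt_one (by positivity)]; nlinarith
  set J : Set ℝ := Set.Icc (-m) m with hJ
  set δ : ℝ := min A 1 with hδdef
  have hδ : 0 < δ := lt_min hA one_pos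
  have hδA : δ ≤ A := min_le_left _ _
  have hδ1 : δ ≤ 1 := min_le_right _ _
  set N : ℕ := Nat.ceil (Real.pi * r / (2 * δ)) with hNdef
  set β : ℝ := cs⁻¹ with hβdef
  have hβ1 : 0 < β := by positivity
  set γ : ℕ → ℝ := fun i => (i:ℝ) - (r:ℝ)/2 with hγdef
  set ψ : ℕ → ℝ → ℝ := fun i x => x + γ i * (h * phiw x) with hψdef
  set ψd : ℕ → ℝ → ℝ := fun i x => 1 - γ i * h * x / phiw x with hψddef
  set g : ℝ → ℝ := fun u => |f u| ^ p * w u with hgdef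
  have hg0 : ∀ u, 0 ≤ g u := fun u =>
    mul_nonneg (Real.rpow_nonneg (abs_nonneg _) _) (hw0 u)
  set K1 : ℝ := (((r:ℝ)+1) * 2^r)^p with hK1def
  have hK1 : 0 < K1 := Real.rpow_pos_of_pos (by positivity) _
  set C' : ℝ := K1 * β^N * 2 with hC'def
  have hC' : 0 < C' := by positivity
  -- basic facts about γ
  have hγbd : ∀ i ∈ Finset.range (r+1), |γ i| ≤ (r:ℝ)/2 := by
    intro i hi
    have hir : (i:ℝ) ≤ (r:ℝ) := by
      exact_mod_cast Nat.lt_succ_iff.1 (Finset.mem_range.1 hi)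
    have hi0 : (0:ℝ) ≤ (i:ℝ) := Nat.cast_nonneg i
    rw [hγdef]; rw [abs_le]; constructor <;> [linarith; linarith]
  -- facts on J
  have hJφ : ∀ x ∈ J, b * (1 + |x|) ≤ phiw x := by
    intro x hx
    have h1 : |x| ≤ m := abs_le.2 ⟨hx.1, hx.2⟩
    have h1' : |x| * (1 + b^2) ≤ 1 - b^2 := by
      rw [hmdef] at h1
      exact (le_div_iff₀ (by positivity)).1 h1
    have h2 : b^2 * (1 + |x|) ≤ 1 - |x| := by nlinarith
    have habs : (0:ℝ) ≤ 1 - |x| := by nlinarith [sq_nonneg b, abs_nonneg x]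
    have hsq : (b * (1 + |x|))^2 ≤ 1 - x^2 := by
      have hxx : 1 - x^2 = (1 - |x|) * (1 + |x|) := by
        rw [← sq_abs]; ring
      rw [hxx]; nlinarith [abs_nonneg x, sq_nonneg b]
    exact (Real.le_sqrt (by positivity) (by nlinarith [abs_nonneg x])).2 hsq
  have hJφpos : ∀ x ∈ J, 0 < phiw x := by
    intro x hx
    have := hJφ x hx
    nlinarith [abs_nonneg x]
  have hJx1 : ∀ x ∈ J, |x| < 1 := by
    intro x hx
    have h1 : |x| ≤ m := abs_le.2 ⟨hx.1, hx.2⟩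
    linarith
  have hJIcc : J ⊆ Set.Icc (-1:ℝ) 1 := by
    intro x hx
    have := hJx1 x hx
    have := abs_lt.1 this
    exact ⟨this.1.le, this.2.le⟩
  -- derivative bounds on J
  have hψdbd : ∀ i ∈ Finset.range (r+1), ∀ x ∈ J, 1/2 ≤ ψd i x ∧ ψd i x ≤ 3/2 := by
    intro i hi x hx
    have hφ := hJφ x hx
    have hφpos := hJφpos x hx
    have hx1 := (hJx1 x hx).le
    have hq : |γ i * h * x / phiw x| ≤ 1/2 := by
      rw [abs_div, abs_of_pos hφpos, div_le_iff₀ hφpos]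
      have e1 : |γ i * h * x| ≤ b * |x| := by
        rw [abs_mul, abs_mul, abs_of_pos hh]
        have e2 := hγbd i hi
        have e3 : |γ i| * h ≤ b := by
          rw [hbdef]
          nlinarith [abs_nonneg (γ i)]
        nlinarith [abs_nonneg x, abs_nonneg (γ i), hh.le]
      have h2 : b * |x| ≤ phiw x / 2 := by nlinarith [abs_nonneg x]
      linarith
    have habs := abs_le.1 hq
    have e : ψd i x = 1 - γ i * h * x / phiw x := rfl
    constructor
    · rw [e]; linarith [habs.2]
    · rw [e]; linarith [habs.1]
  have hder : ∀ i : ℕ, ∀ x ∈ J, HasDerivAt (ψ i) (ψd i x) x := by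
    intro i x hx
    have hφpos := hJφpos x hx
    have hx2 : (1:ℝ) - x^2 ≠ 0 := by
      have : 0 < phiw x := hφpos
      unfold phiw at this
      intro hcon
      rw [hcon] at this
      simp at this
    have h1 : HasDerivAt (fun y : ℝ => 1 - y^2) (-(2*x)) x := by
      simpa using ((hasDerivAt_pow 2 x).const_sub 1)
    have h2 : HasDerivAt phiw (-(2*x) / (2 * phiw x)) x := by
      unfold phiw
      exact h1.sqrt hx2
    have h3 : HasDerivAt (ψ i) (1 + γ i * (h * (-(2*x) / (2 * phiw x)))) x := by
      rw [hψdef]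
      exact (hasDerivAt_id x).add ((h2.const_mul h).const_mul (γ i))
    convert h3 using 1
    rw [hψddef]
    field_simp
    ring
  have hmono : ∀ i ∈ Finset.range (r+1), StrictMonoOn (ψ i) J := by
    intro i hi
    apply strictMonoOn_of_deriv_pos (convex_Icc _ _)
    · apply Continuous.continuousOn
      rw [hψdef]
      exact continuous_id.add (continuous_const.mul (continuous_const.mul continuous_phiw))
    · intro x hx
      rw [interior_Icc] at hx
      have hxJ : x ∈ J := Set.Ioo_subset_Icc_self hx
      rw [(hder i x hxJ).deriv]
      exact lt_of_lt_of_le one_half_pos (hψdbd i hi x hxJ).1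
  have himage : ∀ i ∈ Finset.range (r+1), ∀ x ∈ J, ψ i x ∈ Set.Icc (-1:ℝ) 1 := by
    intro i hi x hx
    have hφpos := hJφpos x hx
    have h1 : |x| ≤ m := abs_le.2 ⟨hx.1, hx.2⟩
    have h1' : |x| * (1 + b^2) ≤ 1 - b^2 := by
      rw [hmdef] at h1
      exact (le_div_iff₀ (by positivity)).1 h1
    have hx2 : 0 ≤ 1 - x^2 := by nlinarith [abs_nonneg x, sq_abs x]
    have hφsq : phiw x ^ 2 = 1 - x^2 := Real.sq_sqrt hx2
    have hxabs := abs_le.1 h1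
    have key1 : b * phiw x ≤ 1 - x := by
      have hsq : (b * phiw x)^2 ≤ (1 - x)^2 := by
        have : b^2 * (1 + x) ≤ 1 - x := by nlinarith [sq_abs x, abs_nonneg x, le_abs_self x]
        nlinarith [phiw_nonneg x, neg_abs_le x, le_abs_self x]
      have h1x : (0:ℝ) ≤ 1 - x := by nlinarith [le_abs_self x]
      nlinarith [mul_nonneg hb.le (phiw_nonneg x)]
    have key2 : b * phiw x ≤ 1 + x := by
      have hsq : (b * phiw x)^2 ≤ (1 + x)^2 := by
        have : b^2 * (1 - x) ≤ 1 + x := by nlinarith [sq_abs x, abs_nonneg x, neg_abs_le x]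
        nlinarith [phiw_nonneg x, neg_abs_le x, le_abs_self x]
      have h1x : (0:ℝ) ≤ 1 + x := by nlinarith [neg_abs_le x]
      nlinarith [mul_nonneg hb.le (phiw_nonneg x)]
    have hγa : |γ i * (h * phiw x)| ≤ b * phiw x := by
      rw [abs_mul]
      have h5 := hγbd i hi
      have h6 : |h * phiw x| = h * phiw x := abs_of_nonneg (by positivity)
      rw [h6, hbdef]
      have : (0:ℝ) ≤ h * phiw x := by positivity
      nlinarith [abs_nonneg (γ i)]
    have habs := abs_le.1 hγa
    have e : ψ i x = x + γ i * (h * phiw x) := rfl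
    constructor
    · rw [e]; linarith
    · rw [e]; linarith
  -- S is closed
  have hSmeas : MeasurableSet S := by
    have : S = Set.Icc (-1:ℝ) 1 ∩ ⋂ j, {x : ℝ | A * rho h (z j) ≤ |x - z j|} := by
      ext x
      simp [hS, ISet, Set.mem_iInter, Set.mem_setOf_eq]
    rw [this]
    apply MeasurableSet.inter measurableSet_Icc
    apply MeasurableSet.iInter
    intro j
    exact (isClosed_le continuous_const ((continuous_id.sub continuous_const).abs)).measurableSet
  -- the weight chain
  have hchain : ∀ x ∈ J,
      Set.Icc (x - (r:ℝ) * (h * phiw x) / 2) (x + (r:ℝ) * (h * phiw x) / 2) ⊆ S →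
      ∀ i ∈ Finset.range (r+1), w x ≤ β^N * w (ψ i x) := by
    intro x hxJ hsub i hi
    have hφpos := hJφpos x hxJ
    have hxI : x ∈ Set.Icc (-1:ℝ) 1 := hJIcc hxJ
    have hyI : ψ i x ∈ Set.Icc (-1:ℝ) 1 := himage i hi x hxJ
    have hbφ : (r:ℝ) * (h * phiw x) / 2 = b * phiw x := by rw [hbdef]; ring
    have epsi : ψ i x = x + γ i * (h * phiw x) := rfl
    have hγa : |ψ i x - x| ≤ b * phiw x := by
      rw [epsi, show x + γ i * (h * phiw x) - x = γ i * (h * phiw x) from by ring,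
        abs_mul, abs_of_nonneg (show (0:ℝ) ≤ h * phiw x from by positivity), hbdef]
      have h5 := hγbd i hi
      have h7 : (0:ℝ) ≤ h * phiw x := by positivity
      calc |γ i| * (h * phiw x) ≤ ((r:ℝ)/2) * (h * phiw x) :=
            mul_le_mul_of_nonneg_right h5 h7
        _ = (r:ℝ) * h / 2 * phiw x := by ring
    have habs2 := abs_le.1 hγa
    have huIccS : Set.uIcc x (ψ i x) ⊆ S := by
      intro u hu
      apply hsub
      rcases Set.mem_uIcc.1 hu with ⟨h1, h2⟩ | ⟨h1, h2⟩ <;>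
        exact Set.mem_Icc.2 ⟨by linarith only [h1, h2, hbφ, habs2.1, habs2.2],
          by linarith only [h1, h2, hbφ, habs2.1, habs2.2]⟩
    set θx := Real.arccos x with hθxdef
    set θy := Real.arccos (ψ i x) with hθydef
    have hθxI : 0 ≤ θx ∧ θx ≤ Real.pi := ⟨Real.arccos_nonneg x, Real.arccos_le_pi x⟩
    have hθyI : 0 ≤ θy ∧ θy ≤ Real.pi := ⟨Real.arccos_nonneg _, Real.arccos_le_pi _⟩
    have hcosx : Real.cos θx = x := Real.cos_arccos hxI.1 hxI.2
    have hcosy : Real.cos θy = ψ i x := Real.cos_arccos hyI.1 hyI.2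
    have hsinx : Real.sin θx = phiw x := by rw [hθxdef, Real.sin_arccos]; rfl
    have hsinxpos : 0 < Real.sin θx := hsinx ▸ hφpos
    have hπd : |θy - θx| ≤ Real.pi := by
      rw [abs_sub_le_iff]
      constructor <;> linarith only [hθxI.1, hθxI.2, hθyI.1, hθyI.2]
    have hΔθ : |θy - θx| ≤ Real.pi * b := by
      apply jordan_bound (abs_nonneg _) hπd
      have hmid0 : 0 ≤ Real.sin ((θx + θy)/2) :=
        Real.sin_nonneg_of_nonneg_of_le_pi (by linarith [hθxI.1, hθyI.1])
          (by linarith [hθxI.2, hθyI.2])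
      have hmid : Real.sin θx / 2 ≤ Real.sin ((θx + θy)/2) := by
        have hcc := sin_mid_ge ⟨hθxI.1, hθxI.2⟩ ⟨hθyI.1, hθyI.2⟩
        have hy0 : 0 ≤ Real.sin θy := Real.sin_nonneg_of_nonneg_of_le_pi hθyI.1 hθyI.2
        linarith only [hcc, hy0]
      have e1 : x - ψ i x = Real.cos θx - Real.cos θy := by rw [hcosx, hcosy]
      have e2 : |x - ψ i x| = 2 * Real.sin ((θx + θy)/2) * Real.sin (|θy - θx|/2) := by
        rw [e1, Real.cos_sub_cos, abs_mul, abs_mul,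
          show |(-2:ℝ)| = 2 from by norm_num, abs_of_nonneg hmid0,
          abs_sin_half (by rw [abs_sub_comm]; exact hπd), abs_sub_comm θx θy]
      have e3 : |x - ψ i x| ≤ b * Real.sin θx := by
        rw [abs_sub_comm, hsinx]; exact hγa
      have hs0 : 0 ≤ Real.sin (|θy - θx|/2) :=
        Real.sin_nonneg_of_nonneg_of_le_pi (by positivity) (by
          have := Real.pi_pos; linarith only [this, abs_nonneg (θy - θx), hπd])
      have h9 : Real.sin θx * Real.sin (|θy - θx|/2) ≤ Real.sin θx * b := by
        calc Real.sin θx * Real.sin (|θy - θx|/2)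
            ≤ 2 * Real.sin ((θx + θy)/2) * Real.sin (|θy - θx|/2) :=
              mul_le_mul_of_nonneg_right (by linarith only [hmid]) hs0
          _ = |x - ψ i x| := e2.symm
          _ ≤ b * Real.sin θx := e3
          _ = Real.sin θx * b := mul_comm _ _
      exact le_of_mul_le_mul_left h9 hsinxpos
    have hrpos : (0:ℝ) < (r:ℝ) := by exact_mod_cast hr
    have hNpos : 0 < (N:ℝ) := by
      have : 0 < N := Nat.ceil_pos.2 (div_pos (mul_pos Real.pi_pos hrpos) (by positivity))
      exact_mod_cast this
    set τ : ℝ := (θy - θx) / N with hτdef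
    have hτ : |τ| ≤ δ * h := by
      rw [hτdef, abs_div, abs_of_pos hNpos, div_le_iff₀ hNpos]
      have hNδ : Real.pi * r / (2 * δ) ≤ (N:ℝ) := Nat.le_ceil _
      have e4 : δ * h * (Real.pi * r / (2*δ)) = Real.pi * r * h / 2 := by
        field_simp
      have e5 : Real.pi * b = Real.pi * r * h / 2 := by rw [hbdef]; ring
      have e6 : δ * h * (Real.pi * r / (2*δ)) ≤ δ * h * N :=
        mul_le_mul_of_nonneg_left hNδ (by positivity)
      calc |θy - θx| ≤ Real.pi * b := hΔθ
        _ = δ * h * (Real.pi * r / (2*δ)) := by rw [e4, e5]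
        _ ≤ δ * h * N := e6
        _ = δ * h * (N:ℝ) := rfl
    set v : ℕ → ℝ := fun k => Real.cos (θx + k * τ) with hvdef
    have hvI : ∀ k : ℕ, v k ∈ Set.Icc (-1:ℝ) 1 := by
      intro k
      simp only [hvdef]
      exact ⟨Real.neg_one_le_cos _, Real.cos_le_one _⟩
    have hv0 : v 0 = x := by simp only [hvdef]; simpa using hcosx
    have hNτ : θx + (N:ℝ) * τ = θy := by rw [hτdef]; field_simp; ring
    have hvN : v N = ψ i x := by
      simp only [hvdef]
      rw [hNτ, hcosy]
    have hθk : ∀ k : ℕ, k ≤ N → (0 ≤ θx + k * τ ∧ θx + k * τ ≤ Real.pi) ∧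
        v k ∈ Set.uIcc x (ψ i x) := by
      intro k hk
      have hkN : (k:ℝ) ≤ (N:ℝ) := by exact_mod_cast hk
      have hk0 : (0:ℝ) ≤ (k:ℝ) := Nat.cast_nonneg k
      have hbet : min θx θy ≤ θx + k*τ ∧ θx + k*τ ≤ max θx θy := by
        rcases le_total 0 τ with hτ0 | hτ0
        · constructor
          · have : (0:ℝ) ≤ (k:ℝ)*τ := mul_nonneg hk0 hτ0
            calc min θx θy ≤ θx := min_le_left _ _
              _ ≤ θx + k*τ := by linarith only [this]
          · have hkk : (k:ℝ)*τ ≤ (N:ℝ)*τ := mul_le_mul_of_nonneg_right hkN hτ0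
            calc θx + k*τ ≤ θx + N*τ := by linarith only [hkk]
              _ = θy := hNτ
              _ ≤ max θx θy := le_max_right _ _
        · constructor
          · have hkk : (N:ℝ)*τ ≤ (k:ℝ)*τ := mul_le_mul_of_nonpos_right hkN hτ0
            calc min θx θy ≤ θy := min_le_right _ _
              _ = θx + N*τ := hNτ.symm
              _ ≤ θx + k*τ := by linarith only [hkk]
          · have : (k:ℝ)*τ ≤ 0 := mul_nonpos_of_nonneg_of_nonpos hk0 hτ0
            calc θx + k*τ ≤ θx := by linarith only [this]
              _ ≤ max θx θy := le_max_left _ _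
      have hmin0 : 0 ≤ min θx θy := le_min hθxI.1 hθyI.1
      have hmaxπ : max θx θy ≤ Real.pi := max_le hθxI.2 hθyI.2
      refine ⟨⟨by linarith only [hmin0, hbet.1], by linarith only [hmaxπ, hbet.2]⟩, ?_⟩
      have hc1 : Real.cos (max θx θy) ≤ v k := by
        simp only [hvdef]
        exact Real.cos_le_cos_of_nonneg_of_le_pi (by linarith only [hmin0, hbet.1]) hmaxπ hbet.2
      have hc2 : v k ≤ Real.cos (min θx θy) := by
        simp only [hvdef]
        exact Real.cos_le_cos_of_nonneg_of_le_pi hmin0 (by linarith only [hmaxπ, hbet.2]) hbet.1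
      rcases le_total θx θy with hle | hle
      · rw [max_eq_right hle] at hc1
        rw [min_eq_left hle] at hc2
        rw [hcosy] at hc1; rw [hcosx] at hc2
        exact Set.mem_uIcc.2 (Or.inr ⟨hc1, hc2⟩)
      · rw [max_eq_left hle] at hc1
        rw [min_eq_right hle] at hc2
        rw [hcosx] at hc1; rw [hcosy] at hc2
        exact Set.mem_uIcc.2 (Or.inl ⟨hc1, hc2⟩)
    have hstep : ∀ k : ℕ, k < N → w (v k) ≤ β * w (v (k+1)) := by
      intro k hk
      have h1 := hθk k hk.le
      have h2 := hθk (k+1) hk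
      have hα : 0 ≤ θx + k*τ := h1.1.1
      have hαπ : θx + k*τ ≤ Real.pi := h1.1.2
      have hvk : phiw (v k) = Real.sin (θx + k*τ) := by
        simp only [hvdef]
        exact phiw_cos hα hαπ
      have hdiff : |v k - v (k+1)| ≤ |τ| * Real.sin (θx + k*τ) + |τ|^2/2 := by
        have hcd := cos_diff_bound (a := θx + k*τ) (b := θx + k*τ + τ) hα hαπ
        rw [show θx + k*τ - (θx + k*τ + τ) = -τ from by ring, abs_neg] at hcd
        have e7 : v k = Real.cos (θx + k*τ) := by simp only [hvdef]
        have e8 : v (k+1) = Real.cos (θx + k*τ + τ) := by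
          simp only [hvdef]
          congr 1
          push_cast
          ring
        rw [e7, e8]; exact hcd
      have hρb : |v k - v (k+1)| ≤ rho (δ*h) (v k) := by
        unfold rho
        rw [hvk]
        have hsα : 0 ≤ Real.sin (θx + k*τ) :=
          Real.sin_nonneg_of_nonneg_of_le_pi hα hαπ
        have p1 : |τ| * Real.sin (θx + k*τ) ≤ δ*h * Real.sin (θx + k*τ) :=
          mul_le_mul_of_nonneg_right hτ hsα
        have p2 : |τ|^2 ≤ (δ*h)^2 := by
          have := abs_nonneg τ
          nlinarith only [hτ, this]
        have p3 : (0:ℝ) ≤ (δ*h)^2 := sq_nonneg _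
        linarith only [hdiff, p1, p2, p3]
      have hsubseg : Set.uIcc (v k) (v (k+1)) ⊆ Set.uIcc x (ψ i x) :=
        Set.uIcc_subset_uIcc h1.2 h2.2
      refine hwZ (δ*h) (by positivity) (v k) (v (k+1)) (hvI k) (hvI (k+1)) hρb ?_
      intro j u hu
      have huS : u ∈ S := huIccS (hsubseg hu)
      have hd := huS.2 j
      have hρz : rho (δ*h) (z j) ≤ A * rho h (z j) := by
        unfold rho
        have hpz := phiw_nonneg (z j)
        have q1 : δ*h * phiw (z j) ≤ A * (h * phiw (z j)) := by
          have : δ * (h * phiw (z j)) ≤ A * (h * phiw (z j)) :=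
            mul_le_mul_of_nonneg_right hδA (by positivity)
          linarith only [this]
        have q2 : (δ*h)^2 ≤ A * h^2 := by
          have hδ2 : δ^2 ≤ A := by nlinarith only [hδA, hδ1, hδ.le]
          have : δ^2 * h^2 ≤ A * h^2 := mul_le_mul_of_nonneg_right hδ2 (sq_nonneg h)
          calc (δ*h)^2 = δ^2 * h^2 := by ring
            _ ≤ A * h^2 := this
        calc δ*h * phiw (z j) + (δ*h)^2 ≤ A * (h * phiw (z j)) + A * h^2 := by
              linarith only [q1, q2]
          _ = A * (h * phiw (z j) + h^2) := by ring
      linarith only [hd, hρz]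
    have hiter : ∀ k : ℕ, k ≤ N → w x ≤ β^k * w (v k) := by
      intro k
      induction k with
      | zero => intro _; rw [hv0]; simp
      | succ n ih =>
        intro hn
        have h1 := ih (Nat.le_of_succ_le hn)
        have h2 := hstep n hn
        calc w x ≤ β^n * w (v n) := h1
          _ ≤ β^n * (β * w (v (n+1))) := mul_le_mul_of_nonneg_left h2 (by positivity)
          _ = β^(n+1) * w (v (n+1)) := by ring
    have hfin := hiter N le_rfl
    rw [hvN] at hfin
    exact hfin
  -- pointwise bound and assembly
  have hp' : p ≠ 0 := ne_of_gt hp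
  set F : ℝ → ℝ := fun x => ∑ i ∈ Finset.range (r+1), |ψd i x| * g (ψ i x) with hFdef
  have hF0 : ∀ x, 0 ≤ F x := by
    intro x
    apply Finset.sum_nonneg
    intro i _
    exact mul_nonneg (abs_nonneg _) (hg0 _)
  set H : ℝ → ℝ := Set.indicator J (fun x => C' * F x) with hHdef
  have hH0 : ∀ x, 0 ≤ H x := by
    intro x
    apply Set.indicator_nonneg
    intro y _
    exact mul_nonneg hC'.le (hF0 y)
  have himg : ∀ i ∈ Finset.range (r+1), ψ i '' J ⊆ Set.Icc (-1:ℝ) 1 := by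
    intro i hi
    rintro _ ⟨x, hxJ, rfl⟩
    exact himage i hi x hxJ
  have hterm : ∀ i ∈ Finset.range (r+1),
      IntegrableOn (fun x => |ψd i x| * g (ψ i x)) J := by
    intro i hi
    have hiff := integrableOn_image_iff_integrableOn_abs_deriv_smul (measurableSet_Icc)
      (fun x hx => (hder i x hx).hasDerivWithinAt) ((hmono i hi).injOn) g
    have h2 := hiff.1 (hfi.mono_set (himg i hi))
    simpa [smul_eq_mul] using h2
  have hFint : IntegrableOn (fun x => C' * F x) J := by
    apply Integrable.const_mul
    exact integrable_finset_sum _ hterm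
  have hHint : Integrable H := hFint.integrable_indicator measurableSet_Icc
  -- pointwise estimate
  have hpt : ∀ x ∈ S, |sdiffR r (h * phiw x) f x S| ^ p * w x ≤ H x := by
    intro x hxS
    by_cases hzero : sdiffR r (h * phiw x) f x S = 0
    · rw [hzero, abs_zero, Real.zero_rpow hp', zero_mul]
      exact hH0 x
    rw [sdiffR] at hzero ⊢
    by_cases hguard : Set.Icc (x - r * (h * phiw x) / 2) (x + r * (h * phiw x) / 2) ⊆ S
    swap
    · rw [if_neg hguard] at hzero; exact absurd rfl hzero
    rw [if_pos hguard] at hzero ⊢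
    have hφpos : 0 < phiw x := by
      rcases (phiw_nonneg x).lt_or_eq with hlt | heq
      · exact hlt
      · exfalso
        apply hzero
        have hz : h * phiw x = 0 := by rw [← heq, mul_zero]
        rw [show (∑ i ∈ Finset.range (r+1), (r.choose i : ℝ) * (-1)^(r - i) *
            f (x - r * (h * phiw x) / 2 + i * (h * phiw x)))
            = (∑ i ∈ Finset.range (r+1), (r.choose i : ℝ) * (-1)^(r - i)) * f x from by
          rw [Finset.sum_mul]
          apply Finset.sum_congr rfl
          intro i _
          rw [hz]
          ring_nf]
        rw [alt_sum_choose hr, zero_mul]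
    -- endpoint bounds give x ∈ J
    have hin1 : x + (r:ℝ) * (h * phiw x) / 2 ∈ Set.Icc (x - (r:ℝ) * (h * phiw x) / 2)
        (x + (r:ℝ) * (h * phiw x) / 2) := by
      constructor
      · have h0 : (0:ℝ) ≤ (r:ℝ) * (h * phiw x) / 2 := by positivity
        linarith only [h0]
      · exact le_rfl
    have hin2 : x - (r:ℝ) * (h * phiw x) / 2 ∈ Set.Icc (x - (r:ℝ) * (h * phiw x) / 2)
        (x + (r:ℝ) * (h * phiw x) / 2) := by
      constructor
      · exact le_rfl
      · have h0 : (0:ℝ) ≤ (r:ℝ) * (h * phiw x) / 2 := by positivity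
        linarith only [h0]
    have hend1 : x + (r:ℝ) * (h * phiw x) / 2 ≤ 1 := (hguard hin1).1.2
    have hend2 : -1 ≤ x - (r:ℝ) * (h * phiw x) / 2 := (hguard hin2).1.1
    have hbφ2 : (r:ℝ) * (h * phiw x) / 2 = b * phiw x := by rw [hbdef]; ring
    have hb1 : b * phiw x ≤ 1 - x := by linarith only [hend1, hbφ2]
    have hb2 : b * phiw x ≤ 1 + x := by linarith only [hend2, hbφ2]
    have hx2pos : 0 < 1 - x^2 := Real.sqrt_pos.1 hφpos
    have hφsq : phiw x ^ 2 = 1 - x^2 := Real.sq_sqrt hx2pos.le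
    have hbφpos : 0 < b * phiw x := mul_pos hb hφpos
    have hx1 : 0 < 1 - x := lt_of_lt_of_le hbφpos hb1
    have hx1' : 0 < 1 + x := lt_of_lt_of_le hbφpos hb2
    have hxJ : x ∈ J := by
      have hpow1 : (b * phiw x)^2 ≤ (1 - x)^2 := by
        have := mul_le_mul hb1 hb1 hbφpos.le hx1.le
        calc (b * phiw x)^2 = (b * phiw x) * (b * phiw x) := sq _
          _ ≤ (1 - x) * (1 - x) := this
          _ = (1 - x)^2 := (sq _).symm
      have hpow2 : (b * phiw x)^2 ≤ (1 + x)^2 := by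
        have := mul_le_mul hb2 hb2 hbφpos.le hx1'.le
        calc (b * phiw x)^2 = (b * phiw x) * (b * phiw x) := sq _
          _ ≤ (1 + x) * (1 + x) := this
          _ = (1 + x)^2 := (sq _).symm
      have hq1 : b^2 * (1 + x) ≤ 1 - x := by
        have e : (b * phiw x)^2 = b^2 * ((1-x)*(1+x)) := by
          rw [mul_pow, hφsq]; ring
        rw [e] at hpow1
        nlinarith only [hpow1, hx1]
      have hq2 : b^2 * (1 - x) ≤ 1 + x := by
        have e : (b * phiw x)^2 = b^2 * ((1-x)*(1+x)) := by
          rw [mul_pow, hφsq]; ring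
        rw [e] at hpow2
        nlinarith only [hpow2, hx1']
      constructor
      · rw [neg_le, hmdef, le_div_iff₀ (by positivity : (0:ℝ) < 1 + b^2)]
        linarith only [hq2]
      · rw [hmdef, le_div_iff₀ (by positivity : (0:ℝ) < 1 + b^2)]
        linarith only [hq1]
    -- choose maximizing index
    obtain ⟨i0, hi0mem, hi0max⟩ := Finset.exists_max_image (Finset.range (r+1))
      (fun i => |f (ψ i x)|) ⟨0, Finset.mem_range.2 (by omega)⟩
    have hargs : ∀ i : ℕ, x - (r:ℝ) * (h * phiw x) / 2 + (i:ℝ) * (h * phiw x) = ψ i x := by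
      intro i
      show _ = x + ((i:ℝ) - (r:ℝ)/2) * (h * phiw x)
      ring
    have hsum : |∑ i ∈ Finset.range (r+1), (r.choose i : ℝ) * (-1)^(r - i) *
        f (x - r * (h * phiw x) / 2 + i * (h * phiw x))| ≤
        ((r:ℝ)+1) * 2^r * |f (ψ i0 x)| := by
      calc |∑ i ∈ Finset.range (r+1), (r.choose i : ℝ) * (-1)^(r - i) *
          f (x - r * (h * phiw x) / 2 + i * (h * phiw x))|
          ≤ ∑ i ∈ Finset.range (r+1), |(r.choose i : ℝ) * (-1)^(r - i) *
            f (x - r * (h * phiw x) / 2 + i * (h * phiw x))| :=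
            Finset.abs_sum_le_sum_abs _ _
        _ ≤ ∑ _i ∈ Finset.range (r+1), (2:ℝ)^r * |f (ψ i0 x)| := by
            apply Finset.sum_le_sum
            intro i hi
            rw [hargs i, abs_mul, abs_mul, abs_pow, abs_neg, abs_one, one_pow, mul_one,
              Nat.abs_cast]
            have hch : (r.choose i : ℝ) ≤ 2^r := by
              have h1 : r.choose i ≤ 2^r := by
                calc r.choose i ≤ ∑ j ∈ Finset.range (r+1), r.choose j :=
                      Finset.single_le_sum (fun j _ => Nat.zero_le _) hi
                  _ = 2^r := Nat.sum_range_choose r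
              exact_mod_cast h1
            exact mul_le_mul hch (hi0max i hi) (abs_nonneg _) (by positivity)
        _ = ((r:ℝ)+1) * 2^r * |f (ψ i0 x)| := by
            rw [Finset.sum_const, Finset.card_range, nsmul_eq_mul]
            push_cast
            ring
    have hH : H x = C' * F x := Set.indicator_of_mem hxJ _
    rw [hH]
    have hwx : w x ≤ β^N * w (ψ i0 x) := hchain x hxJ hguard i0 hi0mem
    have hd := hψdbd i0 hi0mem x hxJ
    have hK1a : |∑ i ∈ Finset.range (r+1), (r.choose i : ℝ) * (-1)^(r - i) *
        f (x - r * (h * phiw x) / 2 + i * (h * phiw x))| ^ p ≤ K1 * |f (ψ i0 x)|^p := by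
      rw [hK1def, ← Real.mul_rpow (by positivity) (abs_nonneg _)]
      exact Real.rpow_le_rpow (abs_nonneg _) hsum hp.le
    have hFge : |ψd i0 x| * g (ψ i0 x) ≤ F x := by
      show _ ≤ ∑ i ∈ Finset.range (r+1), |ψd i x| * g (ψ i x)
      exact Finset.single_le_sum (f := fun i => |ψd i x| * g (ψ i x))
        (fun i _ => mul_nonneg (abs_nonneg _) (hg0 _)) hi0mem
    have hgdef0 : g (ψ i0 x) = |f (ψ i0 x)|^p * w (ψ i0 x) := rfl
    have habsd : |ψd i0 x| = ψd i0 x :=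
      abs_of_nonneg (le_trans (by norm_num : (0:ℝ) ≤ 1/2) hd.1)
    have ha0 : 0 ≤ |f (ψ i0 x)|^p := Real.rpow_nonneg (abs_nonneg _) _
    have h2d : 1 ≤ 2 * ψd i0 x := by
      calc (1:ℝ) = 2 * (1/2) := by norm_num
        _ ≤ 2 * ψd i0 x := mul_le_mul_of_nonneg_left hd.1 (by norm_num)
    have hwy0 : 0 ≤ w (ψ i0 x) := hw0 _
    calc |∑ i ∈ Finset.range (r+1), (r.choose i : ℝ) * (-1)^(r - i) *
        f (x - r * (h * phiw x) / 2 + i * (h * phiw x))| ^ p * w x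
        ≤ (K1 * |f (ψ i0 x)|^p) * (β^N * w (ψ i0 x)) :=
          mul_le_mul hK1a hwx (hw0 x) (by positivity)
      _ = (K1 * β^N) * (|f (ψ i0 x)|^p * w (ψ i0 x)) * 1 := by ring
      _ ≤ (K1 * β^N) * (|f (ψ i0 x)|^p * w (ψ i0 x)) * (2 * ψd i0 x) := by
          apply mul_le_mul_of_nonneg_left h2d
          have : 0 ≤ |f (ψ i0 x)|^p * w (ψ i0 x) := mul_nonneg ha0 hwy0
          positivity
      _ = C' * (ψd i0 x * (|f (ψ i0 x)|^p * w (ψ i0 x))) := by rw [hC'def]; ring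
      _ ≤ C' * F x := by
          apply mul_le_mul_of_nonneg_left _ hC'.le
          rw [hgdef0, habsd] at hFge
          exact hFge
  -- assembly
  have step1 : ∫ x in S, |sdiffR r (h * phiw x) f x S| ^ p * w x ≤ ∫ x in S, H x := by
    apply integral_mono_of_nonneg
    · exact Filter.Eventually.of_forall fun x =>
        mul_nonneg (Real.rpow_nonneg (abs_nonneg _) _) (hw0 x)
    · exact hHint.integrableOn
    · exact ae_restrict_of_forall_mem hSmeas hpt
  have step2 : ∫ x in S, H x ≤ ∫ x, H x :=
    setIntegral_le_integral hHint (Filter.Eventually.of_forall hH0)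
  have step3 : ∫ x, H x = ∫ x in J, C' * F x := integral_indicator measurableSet_Icc
  have step4 : ∫ x in J, C' * F x = C' * ∫ x in J, F x := integral_const_mul _ _
  have step5 : ∫ x in J, F x = ∑ i ∈ Finset.range (r+1),
      ∫ x in J, |ψd i x| * g (ψ i x) := by
    rw [hFdef]
    exact integral_finset_sum _ hterm
  have step6 : ∀ i ∈ Finset.range (r+1),
      ∫ x in J, |ψd i x| * g (ψ i x) ≤ ∫ x in Set.Icc (-1:ℝ) 1, g x := by
    intro i hi
    have heq := integral_image_eq_integral_abs_deriv_smul measurableSet_Icc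
      (fun x hx => (hder i x hx).hasDerivWithinAt) ((hmono i hi).injOn) g
    have heq' : ∫ x in J, |ψd i x| * g (ψ i x) = ∫ u in ψ i '' J, g u := by
      rw [heq]
      simp [smul_eq_mul]; rfl
    rw [heq']
    apply setIntegral_mono_set hfi
    · exact Filter.Eventually.of_forall fun u => hg0 u
    · exact HasSubset.Subset.eventuallyLE (himg i hi)
  have step7 : ∑ i ∈ Finset.range (r+1), ∫ x in J, |ψd i x| * g (ψ i x) ≤
      ((r:ℝ)+1) * ∫ x in Set.Icc (-1:ℝ) 1, g x := by
    calc ∑ i ∈ Finset.range (r+1), ∫ x in J, |ψd i x| * g (ψ i x)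
        ≤ ∑ _i ∈ Finset.range (r+1), ∫ x in Set.Icc (-1:ℝ) 1, g x :=
          Finset.sum_le_sum step6
      _ = ((r:ℝ)+1) * ∫ x in Set.Icc (-1:ℝ) 1, g x := by
          rw [Finset.sum_const, Finset.card_range, nsmul_eq_mul]
          push_cast
          ring
  calc ∫ x in S, |sdiffR r (h * phiw x) f x S| ^ p * w x
      ≤ ∫ x in S, H x := step1
    _ ≤ ∫ x, H x := step2
    _ = C' * ∫ x in J, F x := by rw [step3, step4]
    _ ≤ C' * (((r:ℝ)+1) * ∫ x in Set.Icc (-1:ℝ) 1, g x) := by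
        rw [step5]
        exact mul_le_mul_of_nonneg_left step7 hC'.le
    _ = (K1 * β^N * 2 * ((r:ℝ)+1)) * ∫ x in Set.Icc (-1:ℝ) 1, g x := by
        rw [hC'def]
        ring

theorem stmt17 (M : ℕ) (hM : 1 ≤ M) (z : Fin M → ℝ) (hz : StrictMono z)
    (hzI : ∀ j, z j ∈ Set.Icc (-1:ℝ) 1) (w : ℝ → ℝ) (L : ℝ)
    (hw : IsDoubling w L) (hwZ : WClass M z w)
    (p : ℝ) (hp : 0 < p) (r : ℕ) (hr : 1 ≤ r) (A : ℝ) (hA : 0 < A) :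
    ∃ c : ℝ, 0 < c ∧ ∀ t : ℝ, 0 < t → ∀ f : ℝ → ℝ,
      IntegrableOn (fun x => |f x| ^ p * w x) (Set.Icc (-1:ℝ) 1) →
      omegaMod r p w M z A t f ≤ c * wNorm p w (Set.Icc (-1:ℝ) 1) f := by
  obtain ⟨cs0, hcs0, hWp⟩ := hwZ
  set cs : ℝ := min cs0 1 with hcsdef
  have hcs : 0 < cs := lt_min hcs0 one_pos
  have hwZ' : ∀ ε : ℝ, 0 < ε → ∀ x y : ℝ, x ∈ Set.Icc (-1:ℝ) 1 → y ∈ Set.Icc (-1:ℝ) 1 →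
      |x - y| ≤ rho ε x → (∀ j, ∀ u ∈ Set.uIcc x y, rho ε (z j) ≤ |u - z j|) →
      w x ≤ cs⁻¹ * w y := by
    intro ε hε x y hx hy h1 h2
    have h3 := (hWp ε hε x y hx hy h1 h2).2
    have h4 : cs0⁻¹ ≤ cs⁻¹ := inv_anti₀ hcs (min_le_left _ _)
    calc w x ≤ cs0⁻¹ * w y := h3
      _ ≤ cs⁻¹ * w y := mul_le_mul_of_nonneg_right h4 (hw.1 y)
  set K : ℝ := (((r:ℝ)+1) * 2^r)^p * (cs⁻¹)^(Nat.ceil (Real.pi * r / (2 * min A 1))) * 2 *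
    ((r:ℝ)+1) with hKdef
  have hK : 0 < K := by
    have h1 : (0:ℝ) < (((r:ℝ)+1) * 2^r)^p := Real.rpow_pos_of_pos (by positivity) _
    have h2 : (0:ℝ) < (cs⁻¹)^(Nat.ceil (Real.pi * r / (2 * min A 1))) :=
      pow_pos (by positivity) _
    rw [hKdef]
    positivity
  refine ⟨K^(1/p) + M, by positivity, ?_⟩
  intro t ht f hfi
  have hwn0 : (0:ℝ) ≤ ∫ x in Set.Icc (-1:ℝ) 1, |f x| ^ p * w x :=
    integral_nonneg fun x => mul_nonneg (Real.rpow_nonneg (abs_nonneg _) _) (hw.1 x)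
  have hwnorm0 : 0 ≤ wNorm p w (Set.Icc (-1:ℝ) 1) f := Real.rpow_nonneg hwn0 _
  have hΩ : OmegaMod r p w M z A t f ≤ K^(1/p) * wNorm p w (Set.Icc (-1:ℝ) 1) f := by
    have hne : Nonempty (Set.Ioc (0:ℝ) t) := ⟨⟨t, ⟨ht, le_refl t⟩⟩⟩
    apply ciSup_le
    rintro ⟨h, hh⟩
    have hcore := core_bound M z w hw.1 cs hcs hwZ' p hp r hr A hA f hfi h hh.1
    show wNorm p w (ISet M z A h) (fun x => sdiffR r (h * phiw x) f x (ISet M z A h)) ≤ _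
    unfold wNorm
    have hint0 : (0:ℝ) ≤ ∫ x in ISet M z A h,
        |sdiffR r (h * phiw x) f x (ISet M z A h)| ^ p * w x :=
      integral_nonneg fun x => mul_nonneg (Real.rpow_nonneg (abs_nonneg _) _) (hw.1 x)
    calc (∫ x in ISet M z A h, |sdiffR r (h * phiw x) f x (ISet M z A h)| ^ p * w x) ^ (1/p)
        ≤ (K * ∫ x in Set.Icc (-1:ℝ) 1, |f x| ^ p * w x) ^ (1/p) :=
          Real.rpow_le_rpow hint0 hcore (by positivity)
      _ = K^(1/p) * (∫ x in Set.Icc (-1:ℝ) 1, |f x| ^ p * w x) ^ (1/p) :=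
          Real.mul_rpow hK.le hwn0
  have hE : ∀ j : Fin M, Er r p w (ZSet M z j (2*A) t) f ≤
      wNorm p w (Set.Icc (-1:ℝ) 1) f := by
    intro j
    have hbdd : BddBelow (Set.range fun q : {q : Polynomial ℝ // q.degree < (r : WithBot ℕ)} =>
        wNorm p w (ZSet M z j (2*A) t) (fun x => f x - (q : Polynomial ℝ).eval x)) := by
      refine ⟨0, ?_⟩
      rintro _ ⟨q, rfl⟩
      exact Real.rpow_nonneg (integral_nonneg fun x =>
        mul_nonneg (Real.rpow_nonneg (abs_nonneg _) _) (hw.1 x)) _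
    have hq0 : ((0 : Polynomial ℝ)).degree < (r : WithBot ℕ) := by
      rw [Polynomial.degree_zero]
      exact lt_of_lt_of_le (WithBot.bot_lt_coe 0) (by exact_mod_cast Nat.zero_le r)
    apply ciInf_le_of_le hbdd ⟨0, hq0⟩
    have he : (fun x => f x - ((0:Polynomial ℝ)).eval x) = f := by
      funext x
      simp
    show wNorm p w (ZSet M z j (2*A) t) (fun x => f x - ((0:Polynomial ℝ)).eval x) ≤ _
    rw [he]
    unfold wNorm
    apply Real.rpow_le_rpow
    · exact integral_nonneg fun x =>
        mul_nonneg (Real.rpow_nonneg (abs_nonneg _) _) (hw.1 x)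
    · apply setIntegral_mono_set hfi
      · exact Filter.Eventually.of_forall fun x =>
          mul_nonneg (Real.rpow_nonneg (abs_nonneg _) _) (hw.1 x)
      · exact HasSubset.Subset.eventuallyLE fun x hx => hx.1
    · positivity
  have hsum : ∑ j : Fin M, Er r p w (ZSet M z j (2*A) t) f ≤
      (M:ℝ) * wNorm p w (Set.Icc (-1:ℝ) 1) f := by
    calc ∑ j : Fin M, Er r p w (ZSet M z j (2*A) t) f
        ≤ ∑ _j : Fin M, wNorm p w (Set.Icc (-1:ℝ) 1) f :=
          Finset.sum_le_sum fun j _ => hE j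
      _ = (M:ℝ) * wNorm p w (Set.Icc (-1:ℝ) 1) f := by
          rw [Finset.sum_const, Finset.card_univ, Fintype.card_fin, nsmul_eq_mul]
  show OmegaMod r p w M z A t f + ∑ j : Fin M, Er r p w (ZSet M z j (2*A) t) f ≤ _
  calc OmegaMod r p w M z A t f + ∑ j : Fin M, Er r p w (ZSet M z j (2*A) t) f
      ≤ K^(1/p) * wNorm p w (Set.Icc (-1:ℝ) 1) f +
        (M:ℝ) * wNorm p w (Set.Icc (-1:ℝ) 1) f := add_le_add hΩ hsum
    _ = (K^(1/p) + (M:ℝ)) * wNorm p w (Set.Icc (-1:ℝ) 1) f := by ring
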